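/- arXiv:1611.04231 — 4 statements merged into one kernel-verified Lean document; each statement's English description precedes it below -/
import Mathlib

section
/- Let Q ∈ R^{2×2} be an orthogonal matrix. Then for any positive integer q, there exist matrices W_1, …, W_q ∈ R^{2×2} with ‖W_j − I‖ ≤ π/q for all j, and a diagonal matrix Λ with diagonal entries in {−1, 1}, such that Q = W_1 ⋯ W_q Λ; moreover if Q is a rotation (det Q = 1) then Λ can be taken to be the identity. -/
open Matrix

/-- Spectral (operator) norm of a square real matrix: the operator norm of the
induced linear map on Euclidean space. -/
noncomputable def specNorm {d : ℕ} (A : Matrix (Fin d) (Fin d) ℝ) : ℝ :=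
  ‖LinearMap.toContinuousLinearMap (Matrix.toEuclideanLin A)‖

/-- Smallest singular value of a square real matrix: the infimum of `‖A x‖`
over unit vectors `x`. -/
noncomputable def sigmaMin {d : ℕ} (A : Matrix (Fin d) (Fin d) ℝ) : ℝ :=
  ⨅ x : Metric.sphere (0 : EuclideanSpace ℝ (Fin d)) 1, ‖Matrix.toEuclideanLin A (x : EuclideanSpace ℝ (Fin d))‖

/-- Frobenius norm of a real matrix. -/
noncomputable def frobNorm {m n : ℕ} (A : Matrix (Fin m) (Fin n) ℝ) : ℝ :=
  Real.sqrt (∑ i, ∑ j, (A i j) ^ 2)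


noncomputable def rot (α : ℝ) : Matrix (Fin 2) (Fin 2) ℝ :=
  !![Real.cos α, -Real.sin α; Real.sin α, Real.cos α]

lemma rot_mul (α β : ℝ) : rot α * rot β = rot (α + β) := by
  simp [rot, Matrix.mul_fin_two, Real.cos_add, Real.sin_add]; ring_nf; simp

lemma rot_zero : rot 0 = 1 := by
  ext i j; fin_cases i <;> fin_cases j <;> simp [rot]

lemma rot_pow (α : ℝ) (n : ℕ) : (rot α) ^ n = rot (n * α) := by
  induction n with
  | zero => simpa using rot_zero.symm
  | succ n ih => rw [pow_succ, ih, rot_mul]; congr 1; push_cast; ring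



lemma specNorm_rot_sub_one (α : ℝ) : specNorm (rot α - 1) ≤ |α| := by
  apply ContinuousLinearMap.opNorm_le_bound _ (abs_nonneg α)
  intro x
  rw [LinearMap.coe_toContinuousLinearMap', Matrix.toEuclideanLin_apply]
  set c := Real.cos α - 1 with hc
  set s := Real.sin α with hs
  have hcos : Real.cos α = 1 - 2 * Real.sin (α/2) ^ 2 := by
    have h1 := Real.cos_two_mul (α/2)
    have h2 := Real.sin_sq_add_cos_sq (α/2)
    have h3 : (2:ℝ) * (α/2) = α := by ring
    rw [h3] at h1; nlinarith
  have hcs : c ^ 2 + s ^ 2 ≤ α ^ 2 := by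
    have h3 := Real.sin_sq_le_sq (x := α/2)
    have h4 := Real.sin_sq_add_cos_sq α
    simp only [hc, hs]; nlinarith
  set v : Fin 2 → ℝ := WithLp.equiv 2 (Fin 2 → ℝ) x with hv
  have hx0 : v 0 = x 0 := rfl
  have hx1 : v 1 = x 1 := rfl
  have hA : (rot α - 1) *ᵥ v = ![c * v 0 - s * v 1, s * v 0 + c * v 1] := by
    funext i
    fin_cases i <;>
      simp [rot, Matrix.mulVec, dotProduct, Fin.sum_univ_two, hc, hs] <;>
      ring_nf
  have hnx : ‖x‖ ^ 2 = v 0 ^ 2 + v 1 ^ 2 := by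
    rw [EuclideanSpace.norm_eq, Real.sq_sqrt (by positivity)]
    simp [Fin.sum_univ_two, Real.norm_eq_abs, sq_abs, hx0, hx1]
  have hn : ‖(WithLp.equiv 2 (Fin 2 → ℝ)).symm ((rot α - 1) *ᵥ v)‖ ^ 2
      = (c * v 0 - s * v 1) ^ 2 + (s * v 0 + c * v 1) ^ 2 := by
    rw [EuclideanSpace.norm_eq, Real.sq_sqrt (by positivity)]
    simp [hA, Fin.sum_univ_two, Real.norm_eq_abs, sq_abs]
  have key : ‖(WithLp.equiv 2 (Fin 2 → ℝ)).symm ((rot α - 1) *ᵥ v)‖ ^ 2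
      ≤ (|α| * ‖x‖) ^ 2 := by
    rw [hn, mul_pow, sq_abs, hnx]
    nlinarith [sq_nonneg (v 0), sq_nonneg (v 1)]
  exact (pow_le_pow_iff_left₀ (norm_nonneg _) (by positivity) two_ne_zero).mp key

/-- Any 2×2 orthogonal matrix `Q` factors as `W_1 ⋯ W_q Λ` with each
`‖W_j − I‖ ≤ π/q`, where `Λ` is diagonal with `±1` entries; if `Q` is a
rotation then `Λ` can be taken to be the identity. -/
theorem orthogonal_factorization (Q : Matrix (Fin 2) (Fin 2) ℝ)
    (hQ : Qᵀ * Q = 1) (q : ℕ) (hq : 0 < q) :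
    ∃ (W : Fin q → Matrix (Fin 2) (Fin 2) ℝ) (Λ : Matrix (Fin 2) (Fin 2) ℝ),
      (∀ j, specNorm (W j - 1) ≤ Real.pi / q) ∧
      (∀ i j, i ≠ j → Λ i j = 0) ∧
      (∀ i, Λ i i = 1 ∨ Λ i i = -1) ∧
      Q = (List.ofFn W).prod * Λ ∧
      (Q.det = 1 → Λ = 1) := by
  set a := Q 0 0 with ha
  set b := Q 0 1 with hb'
  set c := Q 1 0 with hc'
  set d := Q 1 1 with hd'
  have h1 : a ^ 2 + c ^ 2 = 1 := by
    have := congrFun (congrFun hQ 0) 0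
    simp [Matrix.mul_apply, Matrix.transpose_apply, Fin.sum_univ_two, Matrix.one_apply] at this
    nlinarith [this]
  have h2 : a * b + c * d = 0 := by
    have := congrFun (congrFun hQ 0) 1
    simpa [Matrix.mul_apply, Matrix.transpose_apply, Fin.sum_univ_two, Matrix.one_apply] using this
  have hdet2 : Q.det = a * d - b * c := by rw [Matrix.det_fin_two]
  have hε2 : Q.det * Q.det = 1 := by
    have h := congrArg Matrix.det hQ
    rwa [Matrix.det_mul, Matrix.det_transpose, Matrix.det_one] at h
  have hε : Q.det = 1 ∨ Q.det = -1 := mul_self_eq_one_iff.mp hε2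
  have hb : b = -(a * d - b * c) * c := by linear_combination (-b) * h1 + a * h2
  have hd : d = (a * d - b * c) * a := by linear_combination (-d) * h1 + c * h2
  have ha1 : -1 ≤ a := by nlinarith
  have ha2 : a ≤ 1 := by nlinarith
  set θ : ℝ := if 0 ≤ c then Real.arccos a else -Real.arccos a with hθ
  have hθcos : Real.cos θ = a := by
    rw [hθ]; split_ifs <;> simp [Real.cos_arccos ha1 ha2]
  have hθsin : Real.sin θ = c := by
    have hs : Real.sin (Real.arccos a) = Real.sqrt (1 - a ^ 2) := Real.sin_arccos a
    have h1c : Real.sqrt (1 - a ^ 2) = |c| := by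
      rw [show (1 : ℝ) - a ^ 2 = c ^ 2 by nlinarith, Real.sqrt_sq_eq_abs]
    rw [hθ]; split_ifs with h
    · rw [hs, h1c, abs_of_nonneg h]
    · rw [Real.sin_neg, hs, h1c, abs_of_neg (lt_of_not_ge h)]; ring
  have hθabs : |θ| ≤ Real.pi := by
    rw [hθ]; split_ifs <;>
      [skip; rw [abs_neg]] <;>
      rw [abs_of_nonneg (Real.arccos_nonneg a)] <;> exact Real.arccos_le_pi a
  refine ⟨fun _ => rot (θ / q), !![1, 0; 0, Q.det], ?_, ?_, ?_, ?_, ?_⟩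
  · intro j
    calc specNorm (rot (θ / q) - 1) ≤ |θ / q| := specNorm_rot_sub_one _
      _ ≤ Real.pi / q := by
        rw [abs_div, abs_of_nonneg (by positivity : (0:ℝ) ≤ (q:ℝ))]
        exact div_le_div_of_nonneg_right hθabs (by positivity)
  · intro i j hij
    fin_cases i <;> fin_cases j
    · exact absurd rfl hij
    · simp
    · simp
    · exact absurd rfl hij
  · intro i
    fin_cases i
    · left; simp
    · simpa using hε
  · have hprod : (List.ofFn (fun _ : Fin q => rot (θ / q))).prod = rot θ := by
      rw [List.ofFn_const, List.prod_replicate, rot_pow]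
      congr 1
      field_simp
    rw [hprod]
    ext i j
    fin_cases i <;> fin_cases j
    · simpa [rot, Matrix.mul_fin_two] using hθcos.symm
    · simp only [rot, Matrix.mul_fin_two]
      rw [hθsin, hdet2]
      simpa using by linear_combination hb
    · simpa [rot, Matrix.mul_fin_two] using hθsin.symm
    · simp only [rot, Matrix.mul_fin_two]
      rw [hθcos, hdet2]
      simpa using by linear_combination hd
  · intro h
    rw [h]
    ext i j; fin_cases i <;> fin_cases j <;> simp [Matrix.one_apply]
end

section
/- Let Σ ∈ R^{d×d} be symmetric positive definite, R ∈ R^{d×d}, and let 0 ≤ τ < 1. Define f(A_1,…,A_ℓ) = ‖((I+A_ℓ)⋯(I+A_1) − R) Σ^{1/2}‖_F². Suppose ‖A_i‖ ≤ τ for every i (spectral norm). Then the squared Frobenius norm of the full gradient of f satisfies ‖∇f(A)‖_F² ≥ 4ℓ (1−τ)^{2(ℓ−1)} σ_min(Σ) (f(A) − C_opt), where C_opt = min over all A' of f(A'). In particular C_opt = 0 here, so ‖∇f(A)‖_F² ≥ 4ℓ (1−τ)^{2(ℓ−1)} σ_min(Σ) f(A). -/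
open Matrix

/-- `(I + A_{ℓ-1}) ⋯ (I + A_0)`, the residual product. -/
noncomputable def resProd {d ℓ : ℕ} (A : Fin ℓ → Matrix (Fin d) (Fin d) ℝ) :
    Matrix (Fin d) (Fin d) ℝ :=
  (List.ofFn fun i => 1 + A i).reverse.prod

attribute [local instance] Matrix.frobeniusNormedAddCommGroup Matrix.frobeniusNormedSpace

namespace GradAux

variable {d ℓ : ℕ}

def frobSq {m n : ℕ} (A : Matrix (Fin m) (Fin n) ℝ) : ℝ := ∑ i, ∑ j, (A i j) ^ 2

lemma frobSq_nonneg {m n : ℕ} (A : Matrix (Fin m) (Fin n) ℝ) : 0 ≤ frobSq A :=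
  Finset.sum_nonneg fun _ _ => Finset.sum_nonneg fun _ _ => sq_nonneg _

lemma frobNorm_sq {m n : ℕ} (A : Matrix (Fin m) (Fin n) ℝ) : frobNorm A ^ 2 = frobSq A :=
  Real.sq_sqrt (frobSq_nonneg A)

lemma frobSq_transpose {m n : ℕ} (A : Matrix (Fin m) (Fin n) ℝ) : frobSq Aᵀ = frobSq A :=
  Finset.sum_comm

lemma frobSq_eq_zero {m n : ℕ} {A : Matrix (Fin m) (Fin n) ℝ} (h : frobSq A = 0) : A = 0 := by
  ext i j
  have h1 := (Finset.sum_eq_zero_iff_of_nonneg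
    (fun i _ => Finset.sum_nonneg fun j _ => sq_nonneg (A i j))).mp h i (Finset.mem_univ i)
  have h2 := (Finset.sum_eq_zero_iff_of_nonneg (fun j _ => sq_nonneg (A i j))).mp h1 j
    (Finset.mem_univ j)
  simpa using pow_eq_zero_iff (n := 2) (by norm_num) |>.mp h2

/-- Lower bound property: `c‖v‖ ≤ ‖Pv‖` in sum-of-squares form. -/
def LB (c : ℝ) (P : Matrix (Fin d) (Fin d) ℝ) : Prop :=
  ∀ v : Fin d → ℝ, c ^ 2 * (∑ i, v i ^ 2) ≤ ∑ i, (P *ᵥ v) i ^ 2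

lemma euc_norm_sq (v : Fin d → ℝ) :
    ‖(WithLp.equiv 2 (Fin d → ℝ)).symm v‖ ^ 2 = ∑ i, v i ^ 2 := by
  rw [EuclideanSpace.norm_eq, Real.sq_sqrt (Finset.sum_nonneg fun _ _ => sq_nonneg _)]
  simp [WithLp.equiv_symm_apply, sq_abs]

lemma lb_of_op {c : ℝ} (hc : 0 ≤ c) {P : Matrix (Fin d) (Fin d) ℝ}
    (h : ∀ x : EuclideanSpace ℝ (Fin d), c * ‖x‖ ≤ ‖Matrix.toEuclideanLin P x‖) : LB c P := by
  intro v
  have hx := h ((WithLp.equiv 2 (Fin d → ℝ)).symm v)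
  have h1 : ‖Matrix.toEuclideanLin P ((WithLp.equiv 2 (Fin d → ℝ)).symm v)‖ ^ 2
      = ∑ i, (P *ᵥ v) i ^ 2 := by
    exact euc_norm_sq (P *ᵥ v)
  calc c ^ 2 * (∑ i, v i ^ 2) = (c * ‖(WithLp.equiv 2 (Fin d → ℝ)).symm v‖) ^ 2 := by
        rw [mul_pow, euc_norm_sq]
    _ ≤ ‖Matrix.toEuclideanLin P ((WithLp.equiv 2 (Fin d → ℝ)).symm v)‖ ^ 2 := by
        apply pow_le_pow_left₀ (by positivity) hx
    _ = ∑ i, (P *ᵥ v) i ^ 2 := h1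

lemma lb_mul {c e : ℝ} {P Q : Matrix (Fin d) (Fin d) ℝ} (hP : LB c P) (hQ : LB e Q) :
    LB (c * e) (P * Q) := by
  intro v
  have h1 := hQ v
  have h2 := hP (Q *ᵥ v)
  calc (c * e) ^ 2 * ∑ i, v i ^ 2 = c ^ 2 * (e ^ 2 * ∑ i, v i ^ 2) := by ring
    _ ≤ c ^ 2 * ∑ i, (Q *ᵥ v) i ^ 2 := mul_le_mul_of_nonneg_left h1 (sq_nonneg c)
    _ ≤ ∑ i, (P *ᵥ (Q *ᵥ v)) i ^ 2 := h2
    _ = ∑ i, ((P * Q) *ᵥ v) i ^ 2 := by rw [Matrix.mulVec_mulVec]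

lemma lb_one : LB (1 : ℝ) (1 : Matrix (Fin d) (Fin d) ℝ) := by
  intro v; simp [Matrix.one_mulVec]

lemma lb_list {c : ℝ} (l : List (Matrix (Fin d) (Fin d) ℝ)) (h : ∀ P ∈ l, LB c P) :
    LB (c ^ l.length) l.prod := by
  induction l with
  | nil => simpa using lb_one
  | cons a l ih =>
      have := lb_mul (h a List.mem_cons_self) (ih fun P hP => h P (List.mem_cons_of_mem a hP))
      simpa [pow_succ, mul_comm] using this

lemma lb_left_mul {c : ℝ} {P : Matrix (Fin d) (Fin d) ℝ} (h : LB c P)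
    (Q : Matrix (Fin d) (Fin d) ℝ) : c ^ 2 * frobSq Q ≤ frobSq (P * Q) := by
  have key : ∀ j, c ^ 2 * (∑ k, Q k j ^ 2) ≤ ∑ i, (P * Q) i j ^ 2 := by
    intro j
    have := h (fun k => Q k j)
    simpa [Matrix.mulVec, Matrix.mul_apply, dotProduct] using this
  calc c ^ 2 * frobSq Q = ∑ j, c ^ 2 * (∑ k, Q k j ^ 2) := by
        rw [frobSq, Finset.sum_comm, Finset.mul_sum]
    _ ≤ ∑ j, ∑ i, (P * Q) i j ^ 2 := Finset.sum_le_sum fun j _ => key j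
    _ = frobSq (P * Q) := by rw [frobSq, Finset.sum_comm]

lemma lb_right_mul {c : ℝ} {P : Matrix (Fin d) (Fin d) ℝ} (h : LB c Pᵀ)
    (Q : Matrix (Fin d) (Fin d) ℝ) : c ^ 2 * frobSq Q ≤ frobSq (Q * P) := by
  have h2 := lb_left_mul h Qᵀ
  rw [frobSq_transpose] at h2
  calc c ^ 2 * frobSq Q ≤ frobSq (Pᵀ * Qᵀ) := h2
    _ = frobSq ((Q * P)ᵀ) := by rw [Matrix.transpose_mul]
    _ = frobSq (Q * P) := frobSq_transpose _

lemma bdd (A : Matrix (Fin d) (Fin d) ℝ) :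
    BddBelow (Set.range fun x : Metric.sphere (0 : EuclideanSpace ℝ (Fin d)) 1 =>
      ‖Matrix.toEuclideanLin A (x : EuclideanSpace ℝ (Fin d))‖) :=
  ⟨0, by rintro y ⟨x, rfl⟩; exact norm_nonneg _⟩

lemma sigmaMin_nonneg (A : Matrix (Fin d) (Fin d) ℝ) : 0 ≤ sigmaMin A := by
  rcases isEmpty_or_nonempty (Metric.sphere (0 : EuclideanSpace ℝ (Fin d)) 1) with h | h
  · simp [sigmaMin, Real.iInf_of_isEmpty]
  · exact le_ciInf fun x => norm_nonneg _

lemma sigmaMin_le (A : Matrix (Fin d) (Fin d) ℝ) (x : EuclideanSpace ℝ (Fin d)) (hx : ‖x‖ = 1) :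
    sigmaMin A ≤ ‖Matrix.toEuclideanLin A x‖ := by
  have hmem : x ∈ Metric.sphere (0 : EuclideanSpace ℝ (Fin d)) 1 := by
    simp [mem_sphere_iff_norm, hx]
  exact ciInf_le (bdd A) (⟨x, hmem⟩ : Metric.sphere (0 : EuclideanSpace ℝ (Fin d)) 1)

lemma sigmaMin_mulVec_le (A : Matrix (Fin d) (Fin d) ℝ) (x : EuclideanSpace ℝ (Fin d)) :
    sigmaMin A * ‖x‖ ≤ ‖Matrix.toEuclideanLin A x‖ := by
  rcases eq_or_ne x 0 with rfl | hx
  · simp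
  · have hn : ‖x‖ ≠ 0 := norm_ne_zero_iff.mpr hx
    have h1 : ‖(‖x‖⁻¹ • x : EuclideanSpace ℝ (Fin d))‖ = 1 := by
      rw [norm_smul]; simp [abs_of_nonneg (norm_nonneg x), inv_mul_cancel₀ hn]
    have h2 := sigmaMin_le A (‖x‖⁻¹ • x) h1
    rw [_root_.map_smul, norm_smul] at h2
    simp only [norm_inv, norm_norm] at h2
    calc sigmaMin A * ‖x‖ ≤ (‖x‖⁻¹ * ‖Matrix.toEuclideanLin A x‖) * ‖x‖ :=
          mul_le_mul_of_nonneg_right h2 (norm_nonneg x)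
      _ = ‖Matrix.toEuclideanLin A x‖ := by field_simp

lemma lb_sigmaMin (A : Matrix (Fin d) (Fin d) ℝ) : LB (sigmaMin A) A :=
  lb_of_op (sigmaMin_nonneg A) (sigmaMin_mulVec_le A)

lemma spec_le (A : Matrix (Fin d) (Fin d) ℝ) (x : EuclideanSpace ℝ (Fin d)) :
    ‖Matrix.toEuclideanLin A x‖ ≤ specNorm A * ‖x‖ := by
  have h2 := (LinearMap.toContinuousLinearMap (Matrix.toEuclideanLin A)).le_opNorm x
  rw [LinearMap.coe_toContinuousLinearMap'] at h2
  exact h2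

lemma specNorm_transpose (A : Matrix (Fin d) (Fin d) ℝ) : specNorm Aᵀ = specNorm A := by
  have h1 : Aᵀ = Aᴴ := (Matrix.conjTranspose_eq_transpose_of_trivial A).symm
  rw [specNorm, h1, Matrix.toEuclideanLin_conjTranspose_eq_adjoint,
    LinearMap.adjoint_toContinuousLinearMap]
  exact ContinuousLinearMap.adjoint.norm_map _

lemma lb_one_add {τ : ℝ} {A : Matrix (Fin d) (Fin d) ℝ} (hτ : τ ≤ 1) (hA : specNorm A ≤ τ) :
    LB (1 - τ) (1 + A) := by
  apply lb_of_op (by linarith)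
  intro x
  have h1 : Matrix.toEuclideanLin (1 + A) x = x + Matrix.toEuclideanLin A x := by
    rw [map_add, LinearMap.add_apply]
    congr 1
    rw [Matrix.toEuclideanLin_apply, Matrix.one_mulVec]
  have h2 : ‖Matrix.toEuclideanLin A x‖ ≤ τ * ‖x‖ := by
    calc ‖Matrix.toEuclideanLin A x‖ ≤ specNorm A * ‖x‖ := spec_le A x
      _ ≤ τ * ‖x‖ := mul_le_mul_of_nonneg_right hA (norm_nonneg x)
  have h3 : ‖x‖ ≤ ‖x + Matrix.toEuclideanLin A x‖ + ‖Matrix.toEuclideanLin A x‖ := by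
    have := norm_add_le (x + Matrix.toEuclideanLin A x) (-(Matrix.toEuclideanLin A x))
    simpa using this
  rw [h1]
  have := norm_nonneg (x + Matrix.toEuclideanLin A x)
  linarith

lemma inner_toEuclideanLin (B : Matrix (Fin d) (Fin d) ℝ) (u x : EuclideanSpace ℝ (Fin d)) :
    (inner ℝ u (Matrix.toEuclideanLin B x) : ℝ)
      = dotProduct (WithLp.equiv 2 (Fin d → ℝ) u)
          (B *ᵥ (WithLp.equiv 2 (Fin d → ℝ) x)) := by
  rw [Matrix.toEuclideanLin_apply]
  simp only [PiLp.inner_apply, RCLike.inner_apply, starRingEnd_apply, star_trivial]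
  exact Finset.sum_congr rfl fun _ _ => mul_comm _ _

lemma norm_sq_euc (x : EuclideanSpace ℝ (Fin d)) : ‖x‖ ^ 2 = ∑ i, x i ^ 2 := by
  rw [EuclideanSpace.norm_eq, Real.sq_sqrt (Finset.sum_nonneg fun _ _ => sq_nonneg _)]
  simp [sq_abs]

lemma sigmaMin_sq_le {B : Matrix (Fin d) (Fin d) ℝ} (hB : B.PosSemidef) :
    sigmaMin (B * B) ≤ sigmaMin B ^ 2 := by
  rcases Nat.eq_zero_or_pos d with hd | hd
  · subst hd
    haveI : IsEmpty (Metric.sphere (0 : EuclideanSpace ℝ (Fin 0)) 1) := by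
      constructor; rintro ⟨x, hx⟩
      rw [mem_sphere_iff_norm] at hx
      have hx0 : x - 0 = 0 := Subsingleton.elim _ _
      rw [hx0, norm_zero] at hx; norm_num at hx
    rw [sigmaMin, Real.iInf_of_isEmpty]
    positivity
  · haveI : Nonempty (Fin d) := ⟨⟨0, hd⟩⟩
    have hH : B.IsHermitian := hB.1
    set b := hH.eigenvectorBasis with hb
    set μ := hH.eigenvalues with hμdef
    obtain ⟨i₀, -, hmin⟩ := Finset.exists_min_image Finset.univ μ
      ⟨Classical.arbitrary _, Finset.mem_univ _⟩
    replace hmin : ∀ i, μ i₀ ≤ μ i := fun i => hmin i (Finset.mem_univ i)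
    have hμ0 : ∀ i, 0 ≤ μ i := fun i => hB.eigenvalues_nonneg i
    have hunit : ∀ i, ‖(b i : EuclideanSpace ℝ (Fin d))‖ = 1 := fun i => b.orthonormal.1 i
    have hBT : Bᵀ = B := by
      rw [← Matrix.conjTranspose_eq_transpose_of_trivial]; exact hH
    have hrepr : ∀ (x : EuclideanSpace ℝ (Fin d)) (i : Fin d),
        b.repr (Matrix.toEuclideanLin B x) i = μ i * b.repr x i := by
      intro x i
      rw [b.repr_apply_apply, b.repr_apply_apply, inner_toEuclideanLin]
      have h2 : dotProduct (WithLp.equiv 2 (Fin d → ℝ) (b i))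
            (B *ᵥ (WithLp.equiv 2 (Fin d → ℝ) x))
          = dotProduct (B *ᵥ (WithLp.equiv 2 (Fin d → ℝ) (b i)))
            (WithLp.equiv 2 (Fin d → ℝ) x) := by
        rw [dotProduct_mulVec, ← Matrix.mulVec_transpose, hBT]
      rw [h2]
      have h3 : B *ᵥ (WithLp.equiv 2 (Fin d → ℝ) (b i))
          = μ i • (WithLp.equiv 2 (Fin d → ℝ) (b i)) := hH.mulVec_eigenvectorBasis i
      rw [h3, smul_dotProduct, smul_eq_mul]
      congr 1
      simp only [PiLp.inner_apply, RCLike.inner_apply, starRingEnd_apply, star_trivial, dotProduct]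
      exact Finset.sum_congr rfl fun _ _ => mul_comm _ _
    have hlow : ∀ x : EuclideanSpace ℝ (Fin d), ‖x‖ = 1 →
        μ i₀ ≤ ‖Matrix.toEuclideanLin B x‖ := by
      intro x hx
      have h1 : ‖Matrix.toEuclideanLin B x‖ ^ 2 = ∑ i, (μ i * b.repr x i) ^ 2 := by
        have hn := norm_sq_euc (b.repr (Matrix.toEuclideanLin B x))
        rw [b.repr.norm_map] at hn
        rw [hn]
        exact Finset.sum_congr rfl fun i _ => by rw [hrepr]
      have h2 : ∑ i, (b.repr x i) ^ 2 = 1 := by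
        have hn := norm_sq_euc (b.repr x)
        rw [b.repr.norm_map x, hx] at hn
        simpa using hn.symm
      have h3 : (μ i₀) ^ 2 ≤ ‖Matrix.toEuclideanLin B x‖ ^ 2 := by
        rw [h1]
        calc (μ i₀) ^ 2 = ∑ i, (μ i₀) ^ 2 * (b.repr x i) ^ 2 := by
              rw [← Finset.mul_sum, h2, mul_one]
          _ ≤ ∑ i, (μ i * b.repr x i) ^ 2 := by
              apply Finset.sum_le_sum
              intro i _
              rw [mul_pow]
              exact mul_le_mul_of_nonneg_right
                (pow_le_pow_left₀ (hμ0 i₀) (hmin i) 2) (sq_nonneg _)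
      calc μ i₀ = Real.sqrt (μ i₀ ^ 2) := (Real.sqrt_sq (hμ0 i₀)).symm
        _ ≤ Real.sqrt (‖Matrix.toEuclideanLin B x‖ ^ 2) := Real.sqrt_le_sqrt h3
        _ = ‖Matrix.toEuclideanLin B x‖ := Real.sqrt_sq (norm_nonneg _)
    have hmu_le : μ i₀ ≤ sigmaMin B := by
      rcases isEmpty_or_nonempty (Metric.sphere (0 : EuclideanSpace ℝ (Fin d)) 1) with he | he
      · exact (he.elim (⟨b i₀, by simp [mem_sphere_iff_norm, hunit i₀]⟩ :
          Metric.sphere (0 : EuclideanSpace ℝ (Fin d)) 1))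
      · exact le_ciInf fun x => hlow x (by simpa [mem_sphere_iff_norm] using x.2)
    have hup : sigmaMin (B * B) ≤ μ i₀ ^ 2 := by
      have h1 : Matrix.toEuclideanLin (B * B) (b i₀)
          = (μ i₀ ^ 2) • (b i₀ : EuclideanSpace ℝ (Fin d)) := by
        apply (WithLp.equiv 2 (Fin d → ℝ)).injective
        show (B * B) *ᵥ (WithLp.equiv 2 (Fin d → ℝ) (b i₀)) = μ i₀ ^ 2 • WithLp.equiv 2 (Fin d → ℝ) (b i₀)
        rw [← Matrix.mulVec_mulVec]
        have h3 : B *ᵥ (WithLp.equiv 2 (Fin d → ℝ) (b i₀))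
            = μ i₀ • (WithLp.equiv 2 (Fin d → ℝ) (b i₀)) := hH.mulVec_eigenvectorBasis i₀
        rw [h3, Matrix.mulVec_smul, h3, smul_smul, ← sq]
      have h4 := sigmaMin_le (B * B) (b i₀) (hunit i₀)
      rw [h1, norm_smul] at h4
      simpa [abs_of_nonneg (sq_nonneg (μ i₀)), hunit i₀] using h4
    calc sigmaMin (B * B) ≤ μ i₀ ^ 2 := hup
      _ ≤ sigmaMin B ^ 2 := pow_le_pow_left₀ (hμ0 i₀) hmu_le 2

lemma prod_set (l : List (Matrix (Fin d) (Fin d) ℝ)) (i : ℕ) (h : i < l.length)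
    (x : Matrix (Fin d) (Fin d) ℝ) :
    ((l.set i x).reverse).prod
      = (l.drop (i+1)).reverse.prod * x * (l.take i).reverse.prod := by
  rw [List.set_eq_take_cons_drop x h]
  simp [List.reverse_append, List.prod_append, mul_assoc]

lemma ofFn_update (A : Fin ℓ → Matrix (Fin d) (Fin d) ℝ) (i : Fin ℓ)
    (X : Matrix (Fin d) (Fin d) ℝ) :
    (List.ofFn fun j => 1 + Function.update A i X j)
      = (List.ofFn fun j => 1 + A j).set i (1 + X) := by
  apply List.ext_getElem
  · simp
  · intro k h1 h2
    simp only [List.getElem_ofFn, List.getElem_set]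
    by_cases hk : (i : ℕ) = k
    · have he : (⟨k, by simpa using h1⟩ : Fin ℓ) = i := by
        apply Fin.ext; simp [hk.symm]
      rw [if_pos hk, he, Function.update_self]
    · have he : (⟨k, by simpa using h1⟩ : Fin ℓ) ≠ i := by
        intro hc; apply hk; rw [← hc]
      rw [if_neg hk, Function.update_of_ne he]

lemma resProd_update (A : Fin ℓ → Matrix (Fin d) (Fin d) ℝ) (i : Fin ℓ)
    (X : Matrix (Fin d) (Fin d) ℝ) :
    resProd (Function.update A i X)
      = ((List.ofFn fun j => 1 + A j).drop ((i:ℕ)+1)).reverse.prod * (1 + X)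
        * ((List.ofFn fun j => 1 + A j).take (i:ℕ)).reverse.prod := by
  rw [resProd, ofFn_update, prod_set _ _ (by simp [i.2])]

lemma resProd_eq (A : Fin ℓ → Matrix (Fin d) (Fin d) ℝ) (i : Fin ℓ) :
    resProd A
      = ((List.ofFn fun j => 1 + A j).drop ((i:ℕ)+1)).reverse.prod * (1 + A i)
        * ((List.ofFn fun j => 1 + A j).take (i:ℕ)).reverse.prod := by
  conv_lhs => rw [← Function.update_eq_self i A]
  exact resProd_update A i (A i)

noncomputable def entryCLM (p q : Fin d) : Matrix (Fin d) (Fin d) ℝ →L[ℝ] ℝ :=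
  LinearMap.toContinuousLinearMap
    { toFun := fun Y => Y p q
      map_add' := fun _ _ => rfl
      map_smul' := fun _ _ => rfl }

noncomputable def lrCLM (L M : Matrix (Fin d) (Fin d) ℝ) :
    Matrix (Fin d) (Fin d) ℝ →L[ℝ] Matrix (Fin d) (Fin d) ℝ :=
  LinearMap.toContinuousLinearMap
    { toFun := fun X => L * X * M
      map_add' := fun a b => by simp [Matrix.mul_add, Matrix.add_mul]
      map_smul' := fun c a => by simp [Matrix.mul_smul, Matrix.smul_mul] }

@[simp] lemma entryCLM_apply (p q : Fin d) (Y : Matrix (Fin d) (Fin d) ℝ) :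
    entryCLM p q Y = Y p q := rfl

@[simp] lemma lrCLM_apply (L M X : Matrix (Fin d) (Fin d) ℝ) :
    lrCLM L M X = L * X * M := rfl

lemma key_fderiv (L M C X₀ Δ : Matrix (Fin d) (Fin d) ℝ) :
    fderiv ℝ (fun X : Matrix (Fin d) (Fin d) ℝ => frobSq (L * X * M + C)) X₀ Δ
      = ∑ p, ∑ q, 2 * ((L * X₀ * M + C) p q) * ((L * Δ * M) p q) := by
  have hent : ∀ p q : Fin d, HasFDerivAt (fun X : Matrix (Fin d) (Fin d) ℝ => (L * X * M + C) p q)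
      ((entryCLM p q).comp (lrCLM L M)) X₀ := by
    intro p q
    have h1 := (((entryCLM p q).comp (lrCLM L M)).hasFDerivAt (x := X₀)).add_const (C p q)
    exact h1
  have hsum : HasFDerivAt (fun X : Matrix (Fin d) (Fin d) ℝ =>
        ∑ p, ∑ q, ((L * X * M + C) p q) * ((L * X * M + C) p q))
      (∑ p : Fin d, ∑ q : Fin d,
        (((L * X₀ * M + C) p q) • ((entryCLM p q).comp (lrCLM L M)) +
          ((L * X₀ * M + C) p q) • ((entryCLM p q).comp (lrCLM L M)))) X₀ := by
    apply HasFDerivAt.fun_sum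
    intro p _
    apply HasFDerivAt.fun_sum
    intro q _
    exact (hent p q).mul (hent p q)
  have heq : (fun X : Matrix (Fin d) (Fin d) ℝ => frobSq (L * X * M + C))
      = fun X => ∑ p, ∑ q, ((L * X * M + C) p q) * ((L * X * M + C) p q) := by
    funext X
    simp [frobSq, sq]
  rw [heq, hsum.fderiv]
  simp only [ContinuousLinearMap.sum_apply, ContinuousLinearMap.add_apply,
    ContinuousLinearMap.coe_smul', Pi.smul_apply, ContinuousLinearMap.coe_comp',
    Function.comp_apply, lrCLM_apply, entryCLM_apply, smul_eq_mul]
  apply Finset.sum_congr rfl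
  intro p _
  apply Finset.sum_congr rfl
  intro q _
  ring

lemma trace_transpose_mul' (E Z : Matrix (Fin d) (Fin d) ℝ) :
    (Eᵀ * Z).trace = ∑ p, ∑ q, E p q * Z p q := by
  simp only [Matrix.trace, Matrix.diag, Matrix.mul_apply, Matrix.transpose_apply]
  exact Finset.sum_comm

lemma eq_of_trace {G H : Matrix (Fin d) (Fin d) ℝ}
    (h : ∀ Δ, (Gᵀ * Δ).trace = (Hᵀ * Δ).trace) : G = H := by
  have h2 : frobSq (G - H) = 0 := by
    have h3 := h (G - H)
    have h4 : ((G - H)ᵀ * (G - H)).trace = 0 := by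
      rw [Matrix.transpose_sub, Matrix.sub_mul, Matrix.trace_sub, h3, sub_self]
    have h5 : ((G - H)ᵀ * (G - H)).trace = frobSq (G - H) := by
      rw [trace_transpose_mul', frobSq]
      exact Finset.sum_congr rfl fun p _ => Finset.sum_congr rfl fun q _ => (sq _).symm
    rw [h5] at h4
    exact h4
  have := frobSq_eq_zero h2
  exact sub_eq_zero.mp this

end GradAux

open GradAux in
/-- Equation (10): the gradient bound
`‖∇f(A)‖_F² ≥ 4ℓ(1−τ)^{2(ℓ−1)} σ_min(Σ) (f(A) − C_opt)` for
`f(A) = ‖((I+A_ℓ)⋯(I+A_1) − R)Σ^{1/2}‖_F²` on the ball `‖A_i‖ ≤ τ < 1`;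
moreover `C_opt = 0`. Here the partial gradients `G i` are specified through
the Fréchet derivative of the corresponding slice function. -/
theorem gradient_lower_bound {d ℓ : ℕ} (hℓ : 0 < ℓ)
    (R Sg B : Matrix (Fin d) (Fin d) ℝ)
    (hSg : Sg.PosDef) (hB : B.PosSemidef) (hBsq : B * B = Sg)
    (τ : ℝ) (hτ0 : 0 ≤ τ) (hτ : τ < 1)
    (f : (Fin ℓ → Matrix (Fin d) (Fin d) ℝ) → ℝ)
    (hf : ∀ A', f A' = (frobNorm ((resProd A' - R) * B)) ^ 2)
    (A : Fin ℓ → Matrix (Fin d) (Fin d) ℝ)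
    (hA : ∀ i, specNorm (A i) ≤ τ)
    (G : Fin ℓ → Matrix (Fin d) (Fin d) ℝ)
    (hG : ∀ i, ∀ Δ : Matrix (Fin d) (Fin d) ℝ,
      fderiv ℝ (fun X => f (Function.update A i X)) (A i) Δ =
        Matrix.trace ((G i)ᵀ * Δ))
    (Copt : ℝ) (hCopt : IsGLB (Set.range f) Copt) :
    Copt = 0 ∧
    4 * ℓ * (1 - τ) ^ (2 * (ℓ - 1)) * sigmaMin Sg * (f A - Copt) ≤
      ∑ i, (frobNorm (G i)) ^ 2 := by
  -- Part 1 : Copt = 0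
  have hfnn : ∀ A', 0 ≤ f A' := by
    intro A'
    rw [hf A']
    exact sq_nonneg _
  have hA₀ : ∃ A₀, f A₀ = 0 := by
    refine ⟨Function.update (fun _ : Fin ℓ => (0 : Matrix (Fin d) (Fin d) ℝ)) ⟨0, hℓ⟩ (R - 1), ?_⟩
    rw [hf, resProd_update]
    have hones : ∀ x ∈ ((List.ofFn fun _ : Fin ℓ =>
        (1 : Matrix (Fin d) (Fin d) ℝ) + 0).drop ((0:ℕ)+1)).reverse, x = 1 := by
      intro x hx
      rw [List.mem_reverse] at hx
      have := List.drop_subset _ _ hx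
      rw [List.mem_ofFn] at this
      obtain ⟨j, rfl⟩ := this
      simp
    have h1 : ((List.ofFn fun _ : Fin ℓ =>
        (1 : Matrix (Fin d) (Fin d) ℝ) + 0).drop ((0:ℕ)+1)).reverse.prod = 1 :=
      List.prod_eq_one hones
    simp only [Fin.val_mk] at h1 ⊢
    rw [h1]
    simp [frobNorm]
  obtain ⟨A₀, hA₀⟩ := hA₀
  have hCopt0 : Copt = 0 := by
    apply le_antisymm
    · have := hCopt.1 ⟨A₀, rfl⟩
      rw [hA₀] at this
      exact this
    · exact hCopt.2 (by rintro y ⟨A', rfl⟩; exact hfnn A')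
  refine ⟨hCopt0, ?_⟩
  -- Part 2 : the bound
  set l : List (Matrix (Fin d) (Fin d) ℝ) := List.ofFn fun j => 1 + A j with hl
  set E : Matrix (Fin d) (Fin d) ℝ := (resProd A - R) * B with hE
  set c : ℝ := 1 - τ with hc
  have hc0 : 0 ≤ c := by rw [hc]; linarith
  have hσB : 0 ≤ sigmaMin B := sigmaMin_nonneg B
  -- bound for each coordinate
  have hkey : ∀ i : Fin ℓ, 4 * c ^ (2 * (ℓ - 1)) * sigmaMin B ^ 2 * frobSq E
      ≤ frobSq (G i) := by
    intro i
    set Ld : Matrix (Fin d) (Fin d) ℝ := (l.drop ((i:ℕ)+1)).reverse.prod with hLd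
    set Md : Matrix (Fin d) (Fin d) ℝ := (l.take (i:ℕ)).reverse.prod with hMd
    set N : Matrix (Fin d) (Fin d) ℝ := Md * B with hN
    set Cc : Matrix (Fin d) (Fin d) ℝ := (Ld * Md - R) * B with hCc
    -- the slice function
    have hslice : (fun X => f (Function.update A i X))
        = fun X => frobSq (Ld * X * N + Cc) := by
      funext X
      rw [hf, frobNorm_sq, resProd_update]
      congr 1
      rw [hN, hCc]
      noncomm_ring
    have hEeq : E = Ld * (A i) * N + Cc := by
      rw [hE, resProd_eq A i, hN, hCc]
      noncomm_ring
    -- identify the gradient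
    have hGi : G i = (2:ℝ) • (Ldᵀ * E * Nᵀ) := by
      apply eq_of_trace
      intro Δ
      have h1 := hG i Δ
      rw [hslice, key_fderiv] at h1
      rw [← h1]
      have h2 : (((2:ℝ) • (Ldᵀ * E * Nᵀ))ᵀ * Δ).trace
          = 2 * (Eᵀ * (Ld * Δ * N)).trace := by
        rw [Matrix.transpose_smul, Matrix.smul_mul, Matrix.trace_smul, smul_eq_mul]
        congr 1
        have hmat : ((Ldᵀ * E * Nᵀ)ᵀ : Matrix (Fin d) (Fin d) ℝ) = N * (Eᵀ * Ld) := by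
          rw [Matrix.transpose_mul, Matrix.transpose_mul]
          simp [Matrix.transpose_transpose, Matrix.mul_assoc]
          rw [hN, Matrix.mul_assoc]
        rw [hmat]
        have hmat2 : N * (Eᵀ * Ld) * Δ = N * (Eᵀ * (Ld * Δ)) := by
          simp [Matrix.mul_assoc]
        rw [hmat2, Matrix.trace_mul_comm]
        have hmat3 : Eᵀ * (Ld * Δ) * N = Eᵀ * (Ld * Δ * N) := by
          simp [Matrix.mul_assoc]
        rw [hmat3]
      rw [h2, trace_transpose_mul', Finset.mul_sum, ← hEeq]
      apply Finset.sum_congr rfl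
      intro p _
      rw [Finset.mul_sum]
      apply Finset.sum_congr rfl
      intro q _
      ring
    -- lower bound the Frobenius norm of the gradient
    have hfour : frobSq (G i) = 4 * frobSq (Ldᵀ * E * Nᵀ) := by
      rw [hGi, frobSq, frobSq, Finset.mul_sum]
      apply Finset.sum_congr rfl
      intro p _
      rw [Finset.mul_sum]
      apply Finset.sum_congr rfl
      intro q _
      simp [Matrix.smul_apply]
      ring
    -- LB for the factors
    have hfac : ∀ P ∈ l, LB c P := by
      intro P hP
      rw [hl, List.mem_ofFn] at hP
      obtain ⟨j, rfl⟩ := hP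
      exact lb_one_add (le_of_lt hτ) (hA j)
    have hMdLB : LB (c ^ (i:ℕ)) Md := by
      have hlen : ((l.take (i:ℕ)).reverse).length = (i:ℕ) := by
        rw [List.length_reverse, List.length_take, hl, List.length_ofFn]
        exact min_eq_left (le_of_lt i.isLt)
      have := lb_list ((l.take (i:ℕ)).reverse) (fun P hP => by
        apply hfac
        rw [List.mem_reverse] at hP
        exact List.take_subset _ _ hP)
      rwa [hlen] at this
    have hLdTLB : LB (c ^ (ℓ - 1 - (i:ℕ))) Ldᵀ := by
      have htp : Ldᵀ = (((l.drop ((i:ℕ)+1)).reverse).map Matrix.transpose).reverse.prod := by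
        rw [hLd, Matrix.transpose_list_prod]
      have hlen : ((((l.drop ((i:ℕ)+1)).reverse).map Matrix.transpose).reverse).length
          = ℓ - 1 - (i:ℕ) := by
        rw [List.length_reverse, List.length_map, List.length_reverse, List.length_drop,
          hl, List.length_ofFn]
        omega
      have hmem : ∀ P ∈ (((l.drop ((i:ℕ)+1)).reverse).map Matrix.transpose).reverse, LB c P := by
        intro P hP
        rw [List.mem_reverse, List.mem_map] at hP
        obtain ⟨Q, hQ, rfl⟩ := hP
        rw [List.mem_reverse] at hQ
        have := List.drop_subset _ _ hQ
        rw [hl, List.mem_ofFn] at this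
        obtain ⟨j, rfl⟩ := this
        rw [Matrix.transpose_add, Matrix.transpose_one]
        exact lb_one_add (le_of_lt hτ) (by rw [specNorm_transpose]; exact hA j)
      have := lb_list _ hmem
      rw [hlen] at this
      rwa [htp]
    -- chain of inequalities
    have hstep : (c ^ (i:ℕ)) ^ 2 * ((sigmaMin B) ^ 2 * ((c ^ (ℓ - 1 - (i:ℕ))) ^ 2 * frobSq E))
        ≤ frobSq (Ldᵀ * E * Nᵀ) := by
      have h0 : frobSq (Ldᵀ * E * Nᵀ) = frobSq (Md * (B * (Eᵀ * Ld))) := by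
        have hBT : Bᵀ = B := by
          rw [← Matrix.conjTranspose_eq_transpose_of_trivial]; exact hB.1
        rw [← frobSq_transpose (Ldᵀ * E * Nᵀ)]
        congr 1
        simp [hN, Matrix.transpose_mul, Matrix.transpose_transpose, hBT, Matrix.mul_assoc]
      rw [h0]
      have h1 : (c ^ (ℓ - 1 - (i:ℕ))) ^ 2 * frobSq E ≤ frobSq (Eᵀ * Ld) := by
        have h1' := lb_right_mul hLdTLB Eᵀ
        rwa [frobSq_transpose] at h1'
      have h2 : (sigmaMin B) ^ 2 * frobSq (Eᵀ * Ld) ≤ frobSq (B * (Eᵀ * Ld)) :=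
        lb_left_mul (lb_sigmaMin B) _
      have h3 : (c ^ (i:ℕ)) ^ 2 * frobSq (B * (Eᵀ * Ld)) ≤ frobSq (Md * (B * (Eᵀ * Ld))) :=
        lb_left_mul hMdLB _
      calc (c ^ (i:ℕ)) ^ 2 * ((sigmaMin B) ^ 2 * ((c ^ (ℓ - 1 - (i:ℕ))) ^ 2 * frobSq E))
          ≤ (c ^ (i:ℕ)) ^ 2 * ((sigmaMin B) ^ 2 * frobSq (Eᵀ * Ld)) := by
            apply mul_le_mul_of_nonneg_left (mul_le_mul_of_nonneg_left h1 (sq_nonneg _)) (sq_nonneg _)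
        _ ≤ (c ^ (i:ℕ)) ^ 2 * frobSq (B * (Eᵀ * Ld)) := by
            apply mul_le_mul_of_nonneg_left h2 (sq_nonneg _)
        _ ≤ frobSq (Md * (B * (Eᵀ * Ld))) := h3
    -- combine exponents
    have hexp : (c ^ (i:ℕ)) ^ 2 * (c ^ (ℓ - 1 - (i:ℕ))) ^ 2 = c ^ (2 * (ℓ - 1)) := by
      have hi : (i:ℕ) + (ℓ - 1 - (i:ℕ)) = ℓ - 1 := by
        have := i.isLt; omega
      rw [← mul_pow, ← pow_add, hi, mul_comm 2 (ℓ - 1), pow_mul]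
    rw [hfour]
    calc 4 * c ^ (2 * (ℓ - 1)) * sigmaMin B ^ 2 * frobSq E
        = 4 * ((c ^ (i:ℕ)) ^ 2 * ((sigmaMin B) ^ 2 * ((c ^ (ℓ - 1 - (i:ℕ))) ^ 2 * frobSq E))) := by
          rw [← hexp]; ring
      _ ≤ 4 * frobSq (Ldᵀ * E * Nᵀ) := by
          apply mul_le_mul_of_nonneg_left hstep (by norm_num)
  -- sum up
  rw [hCopt0, sub_zero]
  have hfA : f A = frobSq E := by rw [hf, frobNorm_sq]
  have hsum : ∑ i, (frobNorm (G i)) ^ 2 = ∑ i, frobSq (G i) :=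
    Finset.sum_congr rfl fun i _ => frobNorm_sq _
  have hσ : sigmaMin Sg ≤ sigmaMin B ^ 2 := by
    rw [← hBsq]; exact sigmaMin_sq_le hB
  have hEnn : 0 ≤ frobSq E := frobSq_nonneg E
  have hl1 : (ℓ:ℝ) * (4 * c ^ (2 * (ℓ - 1)) * sigmaMin B ^ 2 * frobSq E)
      ≤ ∑ i, frobSq (G i) := by
    calc (ℓ:ℝ) * (4 * c ^ (2 * (ℓ - 1)) * sigmaMin B ^ 2 * frobSq E)
        = ∑ _i : Fin ℓ, (4 * c ^ (2 * (ℓ - 1)) * sigmaMin B ^ 2 * frobSq E) := by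
          rw [Finset.sum_const, Finset.card_univ, Fintype.card_fin, nsmul_eq_mul]
      _ ≤ ∑ i, frobSq (G i) := Finset.sum_le_sum fun i _ => hkey i
  rw [hsum, hfA]
  have hfac : (0:ℝ) ≤ 4 * (ℓ:ℝ) * c ^ (2 * (ℓ - 1)) * frobSq E := by positivity
  calc 4 * (ℓ:ℝ) * c ^ (2 * (ℓ - 1)) * sigmaMin Sg * frobSq E
      = (4 * (ℓ:ℝ) * c ^ (2 * (ℓ - 1)) * frobSq E) * sigmaMin Sg := by ring
    _ ≤ (4 * (ℓ:ℝ) * c ^ (2 * (ℓ - 1)) * frobSq E) * (sigmaMin B ^ 2) :=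
        mul_le_mul_of_nonneg_left hσ hfac
    _ = (ℓ:ℝ) * (4 * c ^ (2 * (ℓ - 1)) * sigmaMin B ^ 2 * frobSq E) := by ring
    _ ≤ ∑ i, frobSq (G i) := hl1
end

section
/- Let α^{(1)}, …, α^{(n)} ∈ R^k and let S ⊆ {1,…,n} with |S| = k, and let ρ' > 0. Assume (a) 1 − ρ' ≤ ‖α^{(i)}‖² ≤ 1 + ρ' for all i, and (b) whenever i ≠ j and at least one of i, j lies in S, ‖α^{(i)} − α^{(j)}‖² ≥ 3ρ'. Let β^{(i)} ∈ R^k for i ∈ S be arbitrary. Then there exist U ∈ R^{k×k}, V ∈ R^{k×k}, and s ∈ R^k such that the map T(h) = V ReLU(U h + s) satisfies T(α^{(i)}) = β^{(i)} − α^{(i)} for every i ∈ S, and T(α^{(i)}) = 0 for every i ∉ S. -/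
open Matrix

/-- Lemma B.1 (building block): given vectors `α⁽¹⁾, …, α⁽ⁿ⁾ ∈ ℝᵏ` with norms
close to `1` and pairwise separation involving a subset `S` of size `k`, and
arbitrary targets `β⁽ⁱ⁾` for `i ∈ S`, there are `U, V ∈ ℝ^{k×k}` and `s ∈ ℝᵏ`
such that `T(h) = V ReLU(U h + s)` maps `α⁽ⁱ⁾` to `β⁽ⁱ⁾ − α⁽ⁱ⁾` for `i ∈ S`
and to `0` for `i ∉ S`. -/
theorem residual_block_construction {n k : ℕ} (ρ' : ℝ) (hρ : 0 < ρ')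
    (α β : Fin n → Fin k → ℝ) (S : Finset (Fin n)) (hS : S.card = k)
    (hnorm : ∀ i, 1 - ρ' ≤ α i ⬝ᵥ α i ∧ α i ⬝ᵥ α i ≤ 1 + ρ')
    (hsep : ∀ i j, i ≠ j → (i ∈ S ∨ j ∈ S) →
      3 * ρ' ≤ (α i - α j) ⬝ᵥ (α i - α j)) :
    ∃ (U V : Matrix (Fin k) (Fin k) ℝ) (s : Fin k → ℝ),
      (∀ i ∈ S,
        V.mulVec (fun j => max (U.mulVec (α i) j + s j) 0) = β i - α i) ∧
      (∀ i ∉ S,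
        V.mulVec (fun j => max (U.mulVec (α i) j + s j) 0) = 0) := by
  set e : Fin k ≃ {x // x ∈ S} := (S.equivFinOfCardEq hS).symm with he
  set U : Matrix (Fin k) (Fin k) ℝ := Matrix.of (fun j j' => α (e j) j') with hUdef
  set V : Matrix (Fin k) (Fin k) ℝ :=
    Matrix.of (fun j' j => (4 / ρ') * (β (e j) j' - α (e j) j')) with hVdef
  set s : Fin k → ℝ := fun j => -(α (e j) ⬝ᵥ α (e j)) + ρ' / 4 with hsdef
  have hU : ∀ i j, U.mulVec (α i) j = α (e j) ⬝ᵥ α i := fun i j => rfl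
  -- off-diagonal negativity
  have hneg : ∀ (i : Fin n) (j : Fin k), (e j : Fin n) ≠ i →
      U.mulVec (α i) j + s j ≤ 0 := by
    intro i j hne
    have hsep' := hsep (e j) i hne (Or.inl (e j).2)
    have hexp : (α (e j) - α i) ⬝ᵥ (α (e j) - α i)
        = α (e j) ⬝ᵥ α (e j) - 2 * (α (e j) ⬝ᵥ α i) + α i ⬝ᵥ α i := by
      rw [sub_dotProduct, dotProduct_sub, dotProduct_sub,
        dotProduct_comm (α i) (α (e j))]
      ring
    have h1 := (hnorm (e j)).1
    have h2 := (hnorm i).2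
    rw [hexp] at hsep'
    rw [hU, hsdef]
    nlinarith
  refine ⟨U, V, s, ?_, ?_⟩
  · intro i hi
    set j₀ := e.symm ⟨i, hi⟩ with hj₀
    have hej₀ : (e j₀ : Fin n) = i := by rw [hj₀, Equiv.apply_symm_apply]
    have hrelu : (fun j => max (U.mulVec (α i) j + s j) 0)
        = fun j => if j = j₀ then ρ' / 4 else 0 := by
      funext j
      by_cases h : j = j₀
      · subst h
        rw [if_pos rfl, hU, hej₀, hsdef]
        simp only [hej₀]
        have : α i ⬝ᵥ α i + (-(α i ⬝ᵥ α i) + ρ' / 4) = ρ' / 4 := by ring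
        rw [this, max_eq_left (by linarith)]
      · rw [if_neg h, max_eq_right]
        apply hneg
        intro hc
        apply h
        rw [hj₀]
        apply_fun e
        rw [Equiv.apply_symm_apply]
        exact Subtype.ext hc
    rw [hrelu]
    funext j'
    show ∑ j, V j' j * (if j = j₀ then ρ' / 4 else 0) = β i j' - α i j'
    rw [Finset.sum_eq_single j₀]
    · rw [if_pos rfl, hVdef]
      show (4 / ρ') * (β (e j₀) j' - α (e j₀) j') * (ρ' / 4) = _
      rw [hej₀]
      field_simp
    · intro b _ hb; rw [if_neg hb, mul_zero]
    · intro h; exact absurd (Finset.mem_univ j₀) h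
  · intro i hi
    have hrelu : (fun j => max (U.mulVec (α i) j + s j) 0) = fun _ => 0 := by
      funext j
      exact max_eq_right (hneg i j (fun hc => hi (hc ▸ (e j).2)))
    rw [hrelu]
    funext j'
    show ∑ j, V j' j * (0:ℝ) = 0
    simp
end

section
/- Let Λ ∈ R^{d×d} be a diagonal matrix with all diagonal entries in {−1, +1} and det(Λ) = 1. Then for every positive integer q there exist matrices W'_1, …, W'_q ∈ R^{d×d} with ‖W'_j − I‖ ≤ π/q for all j and Λ = W'_1 ⋯ W'_q. -/
open Matrix

lemma exists_pairing {α : Type*} [DecidableEq α] (S : Finset α) (hS : Even S.card) :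
    ∃ (p : α → α) (ε : α → ℝ),
      ∀ i ∈ S, p i ∈ S ∧ p (p i) = i ∧ p i ≠ i ∧ ε (p i) = -ε i ∧ ε i * ε i = 1 := by
  classical
  set n := S.card with hn
  have hn2 : n % 2 = 0 := Nat.even_iff.mp hS
  set e : {x // x ∈ S} ≃ Fin n := S.equivFin with he
  have pkbound : ∀ k : Fin n, (if k.val % 2 = 0 then k.val + 1 else k.val - 1) < n := by
    rintro ⟨k, hk⟩; dsimp only; split <;> omega
  set pk : Fin n → Fin n := fun k => ⟨_, pkbound k⟩ with hpk
  have hpk_val : ∀ k : Fin n, (pk k).val = if k.val % 2 = 0 then k.val + 1 else k.val - 1 :=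
    fun k => rfl
  have hpk_invol : ∀ k, pk (pk k) = k := by
    intro k
    apply Fin.ext
    rw [hpk_val, hpk_val]
    rcases k with ⟨k, hk⟩
    dsimp only
    split_ifs <;> omega
  have hpk_ne : ∀ k, pk k ≠ k := by
    intro k hkk
    have := congrArg Fin.val hkk
    rw [hpk_val] at this
    rcases k with ⟨k, hk⟩
    dsimp only at this
    split_ifs at this <;> omega
  set εk : Fin n → ℝ := fun k => if k.val % 2 = 0 then 1 else -1 with hεk
  have hεk_flip : ∀ k, εk (pk k) = -εk k := by
    intro k
    simp only [hεk, hpk_val]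
    rcases k with ⟨k, hk⟩
    dsimp only
    split_ifs <;> first | omega | norm_num
  refine ⟨fun i => if h : i ∈ S then (e.symm (pk (e ⟨i, h⟩)) : {x // x ∈ S}).val else i,
    fun i => if h : i ∈ S then εk (e ⟨i, h⟩) else 1, ?_⟩
  intro i hi
  have hpS : (e.symm (pk (e ⟨i, hi⟩)) : {x // x ∈ S}).val ∈ S := (e.symm (pk (e ⟨i, hi⟩))).2
  simp only [dif_pos hi, dif_pos hpS]
  have hsub : (⟨(e.symm (pk (e ⟨i, hi⟩)) : {x // x ∈ S}).val, hpS⟩ : {x // x ∈ S})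
      = e.symm (pk (e ⟨i, hi⟩)) := Subtype.ext rfl
  refine ⟨hpS, ?_, ?_, ?_, ?_⟩
  · simp only [dif_pos hi, dif_pos hpS, hsub, Equiv.apply_symm_apply, hpk_invol,
      Equiv.symm_apply_apply]
  · intro hcontr
    have : (e.symm (pk (e ⟨i, hi⟩))) = (⟨i, hi⟩ : {x // x ∈ S}) := Subtype.ext hcontr
    have := congrArg e this
    rw [Equiv.apply_symm_apply] at this
    exact hpk_ne _ this
  · rw [hsub, Equiv.apply_symm_apply, hεk_flip]
  · simp only [hεk]; split_ifs <;> norm_num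

/-- A diagonal `±1` matrix `Λ` with `det Λ = 1` factors as a product of `q`
matrices each within spectral distance `π/q` of the identity. -/
theorem diag_pm_one_factorization {d : ℕ} (Λ : Matrix (Fin d) (Fin d) ℝ)
    (hdiag : ∀ i j, i ≠ j → Λ i j = 0)
    (hpm : ∀ i, Λ i i = 1 ∨ Λ i i = -1)
    (hdet : Λ.det = 1) (q : ℕ) (hq : 0 < q) :
    ∃ W : Fin q → Matrix (Fin d) (Fin d) ℝ,
      (∀ j, specNorm (W j - 1) ≤ Real.pi / q) ∧
      Λ = (List.ofFn W).prod := by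
  classical
  set θ : ℝ := Real.pi / q with hθ
  have hq0 : (q : ℝ) ≠ 0 := Nat.cast_ne_zero.mpr hq.ne'
  have hθ0 : 0 ≤ θ := by
    rw [hθ]; positivity
  set S : Finset (Fin d) := Finset.univ.filter (fun i => Λ i i = -1) with hSdef
  have hmemS : ∀ i, i ∈ S ↔ Λ i i = -1 := by intro i; simp [hSdef]
  have hΛdiag : Λ = Matrix.diagonal (fun i => Λ i i) := by
    ext i j
    by_cases h : i = j
    · subst h; simp [Matrix.diagonal]
    · simp [Matrix.diagonal, h, hdiag i j h]
  have hdetprod : (∏ i, Λ i i) = 1 := by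
    rw [← Matrix.det_diagonal, ← hΛdiag]; exact hdet
  have hcardeven : Even S.card := by
    have h1 : ∏ i ∈ S, Λ i i = (-1 : ℝ) ^ S.card := by
      rw [Finset.prod_congr rfl (fun i hi => (hmemS i).mp hi), Finset.prod_const]
    have h2 : ∏ i ∈ (Finset.univ.filter (fun i => ¬ Λ i i = -1)), Λ i i = 1 := by
      apply Finset.prod_eq_one
      intro i hi
      rcases hpm i with h | h
      · exact h
      · exact absurd h (Finset.mem_filter.mp hi).2
    have h3 := Finset.prod_filter_mul_prod_filter_not Finset.univ
      (fun i => Λ i i = -1) (fun i => Λ i i)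
    rw [← hSdef, h1, h2, mul_one, hdetprod] at h3
    exact (neg_one_pow_eq_one_iff_even (by norm_num : (-1 : ℝ) ≠ 1)).mp h3
  obtain ⟨p, ε, hpe⟩ := exists_pairing S hcardeven
  set B : Matrix (Fin d) (Fin d) ℝ := Matrix.of (fun i j =>
    if i ∈ S then (if j = i then Real.cos θ else if j = p i then ε i * Real.sin θ else 0)
    else (if j = i then 1 else 0)) with hBdef
  have hB : ∀ i j, B i j =
      if i ∈ S then (if j = i then Real.cos θ else if j = p i then ε i * Real.sin θ else 0)
      else (if j = i then 1 else 0) := fun i j => rfl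
  -- entries of B on a pair
  have hBii : ∀ i, i ∈ S → B i i = Real.cos θ := by
    intro i hi; rw [hB, if_pos hi, if_pos rfl]
  have hBipi : ∀ i, i ∈ S → B i (p i) = ε i * Real.sin θ := by
    intro i hi
    obtain ⟨hpS, hpp, hpne, hεp, hεsq⟩ := hpe i hi
    rw [hB, if_pos hi, if_neg hpne, if_pos rfl]
  have hBpii : ∀ i, i ∈ S → B (p i) i = -(ε i) * Real.sin θ := by
    intro i hi
    obtain ⟨hpS, hpp, hpne, hεp, hεsq⟩ := hpe i hi
    rw [hB, if_pos hpS, if_neg (fun h : i = p i => hpne h.symm), hpp, if_pos rfl, hεp]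
  have hBpipi : ∀ i, i ∈ S → B (p i) (p i) = Real.cos θ := by
    intro i hi
    obtain ⟨hpS, _, _, _, _⟩ := hpe i hi
    rw [hB, if_pos hpS, if_pos rfl]
  have hBi0 : ∀ i j, i ∈ S → j ≠ i → j ≠ p i → B i j = 0 := by
    intro i j hi h1 h2; rw [hB, if_pos hi, if_neg h1, if_neg h2]
  have hBpi0 : ∀ i j, i ∈ S → j ≠ i → j ≠ p i → B (p i) j = 0 := by
    intro i j hi h1 h2
    obtain ⟨hpS, hpp, hpne, hεp, hεsq⟩ := hpe i hi
    rw [hB, if_pos hpS, if_neg h2]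
    rw [hpp, if_neg h1]
  -- the power formula
  have hBpow : ∀ (m : ℕ) (i j : Fin d), (B ^ m) i j =
      if i ∈ S then
        (if j = i then Real.cos (m * θ) else if j = p i then ε i * Real.sin (m * θ) else 0)
      else (if j = i then 1 else 0) := by
    intro m
    induction m with
    | zero =>
      intro i j
      simp only [pow_zero, Matrix.one_apply, Nat.cast_zero, zero_mul, Real.cos_zero,
        Real.sin_zero, mul_zero]
      by_cases hij : j = i
      · subst hij; simp
      · have hij' : ¬ i = j := fun h => hij h.symm
        simp [hij, hij']
    | succ m ih =>
      intro i j
      rw [pow_succ, Matrix.mul_apply]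
      by_cases hi : i ∈ S
      · obtain ⟨hpS, hpp, hpne, hεp, hεsq⟩ := hpe i hi
        have hrow : ∀ k ∈ Finset.univ, k ∉ ({i, p i} : Finset (Fin d)) →
            (B ^ m) i k * B k j = 0 := by
          intro k _ hk
          simp only [Finset.mem_insert, Finset.mem_singleton, not_or] at hk
          rw [ih i k, if_pos hi, if_neg hk.1, if_neg hk.2, zero_mul]
        rw [← Finset.sum_subset (Finset.subset_univ {i, p i}) hrow,
          Finset.sum_pair hpne.symm, ih i i, ih i (p i), if_pos hi, if_pos rfl,
          if_pos hi, if_neg hpne, if_pos rfl, if_pos hi]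
        have hcast : ((m + 1 : ℕ) : ℝ) * θ = (m : ℝ) * θ + θ := by push_cast; ring
        rw [hcast]
        by_cases hji : j = i
        · subst hji
          rw [hBii j hi, hBpii j hi, if_pos rfl, Real.cos_add]
          linear_combination (-(Real.sin ((m : ℝ) * θ) * Real.sin θ)) * hεsq
        · by_cases hjp : j = p i
          · subst hjp
            rw [hBipi i hi, hBpipi i hi, if_neg hji, if_pos rfl, Real.sin_add]
            ring
          · rw [hBi0 i j hi hji hjp, hBpi0 i j hi hji hjp, if_neg hji, if_neg hjp]
            ring
      · rw [if_neg hi]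
        rw [Finset.sum_eq_single i]
        · rw [ih i i, if_neg hi, if_pos rfl, one_mul, hB i j, if_neg hi]
        · intro k _ hk
          rw [ih i k, if_neg hi, if_neg hk, zero_mul]
        · intro h; exact absurd (Finset.mem_univ i) h
  have hqθ : (q : ℝ) * θ = Real.pi := by
    rw [hθ]; field_simp
  -- B ^ q = Λ
  have hBq : B ^ q = Λ := by
    ext i j
    rw [hBpow q i j]
    by_cases hi : i ∈ S
    · obtain ⟨hpS, hpp, hpne, hεp, hεsq⟩ := hpe i hi
      rw [if_pos hi, hqθ]
      by_cases hji : j = i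
      · subst hji
        rw [if_pos rfl, Real.cos_pi]
        exact ((hmemS j).mp hi).symm
      · by_cases hjp : j = p i
        · subst hjp
          rw [if_neg hji, if_pos rfl, Real.sin_pi, mul_zero]
          exact (hdiag i (p i) (fun h => hpne h.symm)).symm
        · rw [if_neg hji, if_neg hjp]
          exact (hdiag i j (fun h => hji h.symm)).symm
    · rw [if_neg hi]
      by_cases hji : j = i
      · subst hji
        rw [if_pos rfl]
        rcases hpm j with h | h
        · exact h.symm
        · exact absurd ((hmemS j).mpr h) hi
      · rw [if_neg hji]
        exact (hdiag i j (fun h => hji h.symm)).symm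
  -- the norm bound
  have hnorm : specNorm (B - 1) ≤ θ := by
    rw [specNorm]
    refine ContinuousLinearMap.opNorm_le_bound _ hθ0 ?_
    intro x
    simp only [LinearMap.coe_toContinuousLinearMap']
    have hentry : ∀ i, (Matrix.toEuclideanLin (B - 1) x) i = ((B - 1) *ᵥ (fun j => x j)) i :=
      fun i => rfl
    -- the vector y
    set y : Fin d → ℝ := (B - 1) *ᵥ (fun j => x j) with hy
    have hy_notS : ∀ i, i ∉ S → y i = 0 := by
      intro i hi
      rw [hy]
      show (∑ j, (B - 1) i j * x j) = 0
      apply Finset.sum_eq_zero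
      intro j _
      rw [Matrix.sub_apply, hB, if_neg hi, Matrix.one_apply]
      by_cases h : j = i
      · subst h; simp
      · rw [if_neg h, if_neg (fun hh : i = j => h hh.symm)]; ring
    have hy_S : ∀ i, i ∈ S → y i = (Real.cos θ - 1) * x i + (ε i * Real.sin θ) * x (p i) := by
      intro i hi
      obtain ⟨hpS, hpp, hpne, hεp, hεsq⟩ := hpe i hi
      rw [hy]
      show (∑ j, (B - 1) i j * x j) = _
      have hrow : ∀ k ∈ Finset.univ, k ∉ ({i, p i} : Finset (Fin d)) →
          (B - 1) i k * x k = 0 := by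
        intro k _ hk
        simp only [Finset.mem_insert, Finset.mem_singleton, not_or] at hk
        rw [Matrix.sub_apply, hBi0 i k hi hk.1 hk.2, Matrix.one_apply,
          if_neg (fun h : i = k => hk.1 h.symm)]
        ring
      rw [← Finset.sum_subset (Finset.subset_univ {i, p i}) hrow,
        Finset.sum_pair hpne.symm, Matrix.sub_apply, Matrix.sub_apply,
        hBii i hi, hBipi i hi, Matrix.one_apply_eq,
        Matrix.one_apply_ne (fun h : i = p i => hpne h.symm)]
      ring
    -- cross-term vanishes
    have hcross : ∑ i ∈ S, ε i * (x i * x (p i)) = 0 := by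
      apply Finset.sum_involution (g := fun a ha => p a)
      · intro a ha
        obtain ⟨hpS, hpp, hpne, hεp, hεsq⟩ := hpe a ha
        rw [hpp, hεp]; ring
      · intro a ha _
        exact (hpe a ha).2.2.1
      · intro a ha
        exact (hpe a ha).1
      · intro a ha
        exact (hpe a ha).2.1
    -- swap sum
    have hswap : ∑ i ∈ S, x (p i) ^ 2 = ∑ i ∈ S, x i ^ 2 := by
      apply Finset.sum_nbij' (i := p) (j := p)
      · intro a ha; exact (hpe a ha).1
      · intro a ha; exact (hpe a ha).1
      · intro a ha; exact (hpe a ha).2.1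
      · intro a ha; exact (hpe a ha).2.1
      · intro a ha; rfl
    have hkey : ∑ i ∈ S, y i ^ 2 = (2 - 2 * Real.cos θ) * ∑ i ∈ S, x i ^ 2 := by
      have hexp : ∀ i ∈ S, y i ^ 2 =
          (Real.cos θ - 1) ^ 2 * x i ^ 2 + Real.sin θ ^ 2 * x (p i) ^ 2 +
            (2 * (Real.cos θ - 1) * Real.sin θ) * (ε i * (x i * x (p i))) := by
        intro i hi
        obtain ⟨hpS, hpp, hpne, hεp, hεsq⟩ := hpe i hi
        rw [hy_S i hi]
        linear_combination (Real.sin θ ^ 2 * x (p i) ^ 2) * hεsq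
      rw [Finset.sum_congr rfl hexp, Finset.sum_add_distrib, Finset.sum_add_distrib,
        ← Finset.mul_sum, ← Finset.mul_sum, ← Finset.mul_sum, hcross, mul_zero, add_zero,
        hswap]
      have := Real.sin_sq_add_cos_sq θ
      linear_combination (∑ i ∈ S, x i ^ 2) * this
    have hxS : ∑ i ∈ S, x i ^ 2 ≤ ∑ i, x i ^ 2 :=
      Finset.sum_le_sum_of_subset_of_nonneg (Finset.subset_univ S)
        (fun i _ _ => sq_nonneg _)
    have hxS0 : 0 ≤ ∑ i ∈ S, x i ^ 2 := Finset.sum_nonneg (fun i _ => sq_nonneg _)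
    have hcos : 2 - 2 * Real.cos θ ≤ θ ^ 2 := by
      have := Real.one_sub_sq_div_two_le_cos (x := θ)
      linarith
    have hsum_le : ∑ i, y i ^ 2 ≤ θ ^ 2 * ∑ i, x i ^ 2 := by
      have h1 : ∑ i, y i ^ 2 = ∑ i ∈ S, y i ^ 2 := by
        symm
        apply Finset.sum_subset (Finset.subset_univ S)
        intro i _ hi
        rw [hy_notS i hi]; ring
      rw [h1, hkey]
      calc (2 - 2 * Real.cos θ) * ∑ i ∈ S, x i ^ 2
          ≤ θ ^ 2 * ∑ i ∈ S, x i ^ 2 := mul_le_mul_of_nonneg_right hcos hxS0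
        _ ≤ θ ^ 2 * ∑ i, x i ^ 2 :=
            mul_le_mul_of_nonneg_left hxS (sq_nonneg _)
    have hnx : ‖Matrix.toEuclideanLin (B - 1) x‖ = Real.sqrt (∑ i, y i ^ 2) := by
      rw [EuclideanSpace.norm_eq]
      congr 1
      apply Finset.sum_congr rfl
      intro i _
      rw [Real.norm_eq_abs, sq_abs, hentry i]
    have hnxx : ‖x‖ = Real.sqrt (∑ i, x i ^ 2) := by
      rw [EuclideanSpace.norm_eq]
      congr 1
      apply Finset.sum_congr rfl
      intro i _
      rw [Real.norm_eq_abs, sq_abs]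
    rw [hnx, hnxx]
    calc Real.sqrt (∑ i, y i ^ 2) ≤ Real.sqrt (θ ^ 2 * ∑ i, x i ^ 2) :=
          Real.sqrt_le_sqrt hsum_le
      _ = θ * Real.sqrt (∑ i, x i ^ 2) := by
          rw [Real.sqrt_mul (sq_nonneg θ), Real.sqrt_sq hθ0]
  refine ⟨fun _ => B, fun j => hnorm, ?_⟩
  rw [List.ofFn_const, List.prod_replicate, hBq]
end
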